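/- arXiv:1403.3894 — 5 statements merged into one kernel-verified Lean document; each statement's English description precedes it below -/
import Mathlib

section
/- Let U ⊆ ℝ² be a compact convex set, let b ⊆ ℝ² be a line segment disjoint from U with length |b|, and let ε ∈ [0, π/2]. Suppose the set A := {α ∈ [0, 2π) : U(α) ∩ b(α) ≠ ∅} has Lebesgue measure at most 2π − 4ε. Then ∫₀^{2π} λ(b(α) ∩ U(α)) dα ≤ 4·|b|·cos ε, where λ is one-dimensional Lebesgue measure. -/
open MeasureTheory Set
open scoped ENNReal NNReal

noncomputable section

/-- The Euclidean plane ℝ². -/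
abbrev Plane := EuclideanSpace ℝ (Fin 2)

/-- A line in ℝ²: the set {p + t·v : t ∈ ℝ} for some point p and nonzero vector v. -/
def IsLine (L : Set Plane) : Prop :=
  ∃ p v : Plane, v ≠ 0 ∧ L = {x | ∃ t : ℝ, x = p + t • v}

/-- `B` is a barrier (opaque set) for `U`: every line meeting `U` meets `B`. -/
def IsBarrier (B U : Set Plane) : Prop :=
  ∀ L : Set Plane, IsLine L → (L ∩ U).Nonempty → (L ∩ B).Nonempty

/-- `B` is rectifiable: a countable union of images of Lipschitz curves `[0,1] → ℝ²`. -/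
def IsRectifiableSet (B : Set Plane) : Prop :=
  ∃ (c : Set ℕ) (f : ℕ → ℝ → Plane),
    (∀ n ∈ c, ∃ K : ℝ≥0, LipschitzOnWith K (f n) (Icc 0 1)) ∧
    B = ⋃ n ∈ c, f n '' Icc 0 1

/-- The projection `S(α) ⊆ ℝ` of a set `S ⊆ ℝ²` at angle `α`:
`S(α) = {x·cos α + y·sin α : (x, y) ∈ S}`. -/
def proj (α : ℝ) (S : Set Plane) : Set ℝ :=
  (fun q : Plane => q 0 * Real.cos α + q 1 * Real.sin α) '' S

open intervalIntegral in
lemma bathtub (ε : ℝ) (hε : ε ∈ Icc 0 (Real.pi/2)) :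
    ∫ t in (0:ℝ)..(2*Real.pi), max (|Real.cos t| - Real.sin ε) 0
      = 4 * Real.cos ε - (2*Real.pi - 4*ε) * Real.sin ε := by
  obtain ⟨hε0, hε2⟩ := hε
  have hπ := Real.pi_pos
  set f : ℝ → ℝ := fun t => max (|Real.cos t| - Real.sin ε) 0 with hf
  have hcont : Continuous f := (Real.continuous_cos.abs.sub continuous_const).max continuous_const
  have hint : ∀ a b : ℝ, IntervalIntegrable f volume a b := fun a b => hcont.intervalIntegrable a b
  have hper : Function.Periodic f Real.pi := by
    intro t; simp [hf, Real.cos_add_pi, abs_neg]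
  -- integral over [0, π/2]
  have I1 : ∫ t in (0:ℝ)..(Real.pi/2), f t = Real.cos ε - (Real.pi/2 - ε) * Real.sin ε := by
    have hsplit := integral_add_adjacent_intervals (a := (0:ℝ)) (b := Real.pi/2 - ε)
      (c := Real.pi/2) (hint _ _) (hint _ _)
    have e1 : ∫ t in (0:ℝ)..(Real.pi/2 - ε), f t
        = Real.cos ε - (Real.pi/2 - ε) * Real.sin ε := by
      have : ∫ t in (0:ℝ)..(Real.pi/2 - ε), f t
          = ∫ t in (0:ℝ)..(Real.pi/2 - ε), (Real.cos t - Real.sin ε) := by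
        apply integral_congr
        intro t ht
        rw [uIcc_of_le (by linarith)] at ht
        obtain ⟨ht0, ht1⟩ := ht
        have hc0 : 0 ≤ Real.cos t :=
          Real.cos_nonneg_of_mem_Icc ⟨by linarith, by linarith⟩
        have hcge : Real.sin ε ≤ Real.cos t := by
          rw [← Real.cos_pi_div_two_sub ε]
          exact Real.cos_le_cos_of_nonneg_of_le_pi ht0 (by linarith) ht1
        simp [hf, abs_of_nonneg hc0, max_eq_left, sub_nonneg.2 hcge]
      rw [this, integral_sub (Continuous.intervalIntegrable Real.continuous_cos _ _)
        (intervalIntegrable_const), integral_cos, intervalIntegral.integral_const]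
      simp [Real.sin_pi_div_two_sub, smul_eq_mul]
    have e2 : ∫ t in (Real.pi/2 - ε)..(Real.pi/2), f t = 0 := by
      have : ∫ t in (Real.pi/2 - ε)..(Real.pi/2), f t
          = ∫ t in (Real.pi/2 - ε)..(Real.pi/2), (0:ℝ) := by
        apply integral_congr
        intro t ht
        rw [uIcc_of_le (by linarith)] at ht
        obtain ⟨ht0, ht1⟩ := ht
        have hc0 : 0 ≤ Real.cos t :=
          Real.cos_nonneg_of_mem_Icc ⟨by linarith, by linarith⟩
        have hcle : Real.cos t ≤ Real.sin ε := by
          rw [← Real.cos_pi_div_two_sub ε]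
          exact Real.cos_le_cos_of_nonneg_of_le_pi (by linarith) (by linarith) ht0
        simp [hf, abs_of_nonneg hc0, max_eq_right, sub_nonpos.2 hcle]
      rw [this, intervalIntegral.integral_zero]
    rw [← hsplit, e1, e2, add_zero]
  -- integral over [0, π]
  have I2 : ∫ t in (0:ℝ)..Real.pi, f t = 2 * (Real.cos ε - (Real.pi/2 - ε) * Real.sin ε) := by
    have hsplit := integral_add_adjacent_intervals (a := (0:ℝ)) (b := Real.pi/2)
      (c := Real.pi) (hint _ _) (hint _ _)
    have hrefl : ∫ t in (Real.pi/2)..Real.pi, f t = ∫ t in (0:ℝ)..(Real.pi/2), f t := by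
      have h1 := integral_comp_sub_left (a := (0:ℝ)) (b := Real.pi/2) f Real.pi
      have h2 : ∀ t : ℝ, f (Real.pi - t) = f t := by
        intro t; simp [hf, Real.cos_pi_sub, abs_neg]
      simp only [h2] at h1
      have h3 : Real.pi - Real.pi/2 = Real.pi/2 := by ring
      have h4 : Real.pi - 0 = Real.pi := by ring
      rw [h3, h4] at h1
      exact h1.symm
    rw [← hsplit, hrefl, I1]; ring
  -- full integral
  have hsplit := integral_add_adjacent_intervals (a := (0:ℝ)) (b := Real.pi)
    (c := 2*Real.pi) (hint _ _) (hint _ _)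
  have hshift : ∫ t in Real.pi..(2*Real.pi), f t = ∫ t in (0:ℝ)..Real.pi, f t := by
    have := hper.intervalIntegral_add_eq Real.pi 0
    simpa [two_mul] using this
  rw [← hsplit, hshift, I2]; ring

open intervalIntegral in
lemma bathtub' (r β ε : ℝ) (hr : 0 ≤ r) (hε : ε ∈ Icc 0 (Real.pi/2)) :
    ∫ t in (0:ℝ)..(2*Real.pi), max (r * |Real.cos (t - β)| - r * Real.sin ε) 0
      = 4 * r * Real.cos ε - (2*Real.pi - 4*ε) * (r * Real.sin ε) := by
  have hpt : ∀ t : ℝ, max (r * |Real.cos (t - β)| - r * Real.sin ε) 0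
      = r * max (|Real.cos (t - β)| - Real.sin ε) 0 := by
    intro t
    rw [mul_max_of_nonneg _ _ hr, mul_sub, mul_zero]
  simp only [hpt]
  rw [intervalIntegral.integral_const_mul]
  have hshift : ∫ t in (0:ℝ)..(2*Real.pi), max (|Real.cos (t - β)| - Real.sin ε) 0
      = ∫ t in (0:ℝ)..(2*Real.pi), max (|Real.cos t| - Real.sin ε) 0 := by
    have h1 := integral_comp_sub_right (a := (0:ℝ)) (b := 2*Real.pi)
      (fun t => max (|Real.cos t| - Real.sin ε) 0) β
    rw [h1]
    have hper : Function.Periodic (fun t => max (|Real.cos t| - Real.sin ε) 0) (2*Real.pi) := by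
      intro t; simp [Real.cos_add_two_pi]
    have := hper.intervalIntegral_add_eq (0 - β) 0
    have e1 : 0 - β + 2*Real.pi = 2*Real.pi - β := by ring
    have e2 : (0:ℝ) + 2*Real.pi = 2*Real.pi := by ring
    rw [e1, e2] at this
    exact this
  rw [hshift, bathtub ε hε]
  ring

def projL (α : ℝ) : Plane →ₗ[ℝ] ℝ where
  toFun q := q 0 * Real.cos α + q 1 * Real.sin α
  map_add' p q := by simp [PiLp.add_apply]; ring
  map_smul' c q := by simp [PiLp.smul_apply, smul_eq_mul]; ring

lemma proj_segment (α : ℝ) (x y : Plane) :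
    proj α (segment ℝ x y)
      = segment ℝ (x 0 * Real.cos α + x 1 * Real.sin α) (y 0 * Real.cos α + y 1 * Real.sin α) := by
  have h := image_segment ℝ (projL α).toAffineMap x y
  simpa [proj, projL] using h

lemma volume_proj_segment (α : ℝ) (x y : Plane) :
    volume (proj α (segment ℝ x y))
      = ENNReal.ofReal |(x 0 - y 0) * Real.cos α + (x 1 - y 1) * Real.sin α| := by
  rw [proj_segment, segment_eq_uIcc, Real.volume_interval]
  congr 1
  rw [abs_sub_comm]
  congr 1
  ring

/-- Lemma 5 (far outside): if a segment `b` lies outside a compact convex set `U`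
and the set of angles of lines through both `U` and `b` has measure at most
`2π − 4ε`, then `∫₀^{2π} λ(b(α) ∩ U(α)) dα ≤ 4·|b|·cos ε`. -/
theorem far_outside_waste
    (U : Set Plane) (hUcomp : IsCompact U) (hUconv : Convex ℝ U)
    (x y : Plane) (b : Set Plane) (hb : b = segment ℝ x y)
    (hdisj : Disjoint b U)
    (ε : ℝ) (hε : ε ∈ Icc 0 (Real.pi / 2))
    (hA : volume {α ∈ Ico 0 (2 * Real.pi) | (proj α U ∩ proj α b).Nonempty}
        ≤ ENNReal.ofReal (2 * Real.pi - 4 * ε)) :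
    (∫⁻ α in Ico 0 (2 * Real.pi), volume (proj α b ∩ proj α U))
      ≤ ENNReal.ofReal (4 * dist x y * Real.cos ε) := by
  obtain ⟨hε0, hε2⟩ := hε
  have hπ := Real.pi_pos
  have hsε : 0 ≤ Real.sin ε :=
    Real.sin_nonneg_of_nonneg_of_le_pi hε0 (by linarith)
  have hcε : 0 ≤ Real.cos ε :=
    Real.cos_nonneg_of_mem_Icc ⟨by linarith, hε2⟩
  set d0 : ℝ := x 0 - y 0 with hd0
  set d1 : ℝ := x 1 - y 1 with hd1
  set r : ℝ := dist x y with hrdef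
  have hr0 : 0 ≤ r := dist_nonneg
  have hrd : r = Real.sqrt (d0 ^ 2 + d1 ^ 2) := by
    rw [hrdef, EuclideanSpace.dist_eq]
    congr 1
    simp [Fin.sum_univ_two, Real.dist_eq, sq_abs, hd0, hd1]
  -- polar angle
  obtain ⟨β, hβ0, hβ1⟩ : ∃ β, d0 = r * Real.cos β ∧ d1 = r * Real.sin β := by
    by_cases hz : d0 = 0 ∧ d1 = 0
    · refine ⟨0, ?_, ?_⟩ <;> simp [hz.1, hz.2, hrd, Real.cos_zero, Real.sin_zero]
    · set z : ℂ := d0 + d1 * Complex.I with hzdef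
      have hzne : z ≠ 0 := by
        intro h
        apply hz
        constructor
        · have := congrArg Complex.re h; simpa [hzdef] using this
        · have := congrArg Complex.im h; simpa [hzdef] using this
      have habs : ‖z‖ = r := by
        rw [hzdef, Complex.norm_add_mul_I, hrd]
      refine ⟨Complex.arg z, ?_, ?_⟩
      · have := Complex.cos_arg hzne
        rw [this, habs]
        field_simp [habs ▸ (norm_ne_zero_iff.mpr hzne)]
        simp [hzdef]
      · have := Complex.sin_arg z
        rw [this, habs]
        field_simp [habs ▸ (norm_ne_zero_iff.mpr hzne)]
        simp [hzdef]
  -- the projection length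
  have hg : ∀ α : ℝ, |d0 * Real.cos α + d1 * Real.sin α| = r * |Real.cos (α - β)| := by
    intro α
    have : d0 * Real.cos α + d1 * Real.sin α = r * Real.cos (α - β) := by
      rw [hβ0, hβ1, Real.cos_sub]; ring
    rw [this, abs_mul, abs_of_nonneg hr0]
  have hvol : ∀ α : ℝ, volume (proj α b ∩ proj α U)
      ≤ ENNReal.ofReal (r * |Real.cos (α - β)|) := by
    intro α
    refine le_trans (measure_mono inter_subset_left) ?_
    rw [hb, volume_proj_segment, ← hd0, ← hd1, hg]
  -- bathtub function
  set h : ℝ → ℝ := fun α => max (r * |Real.cos (α - β)| - r * Real.sin ε) 0 with hhdef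
  have hcont : Continuous h := by
    apply Continuous.max _ continuous_const
    exact (continuous_const.mul (Real.continuous_cos.comp
      (continuous_id.sub continuous_const)).abs).sub continuous_const
  -- sets
  set A : Set ℝ := {α ∈ Ico 0 (2 * Real.pi) | (proj α U ∩ proj α b).Nonempty} with hAdef
  set A' : Set ℝ := toMeasurable volume A with hA'def
  have hA'meas : MeasurableSet A' := measurableSet_toMeasurable _ _
  have hA'vol : volume A' = volume A := measure_toMeasurable _
  -- pointwise bound
  have key : ∀ α ∈ Ico 0 (2 * Real.pi),
      volume (proj α b ∩ proj α U)
        ≤ A'.indicator (fun _ => ENNReal.ofReal (r * Real.sin ε)) α + ENNReal.ofReal (h α) := by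
    intro α hα
    by_cases hmem : α ∈ A'
    · rw [indicator_of_mem hmem]
      refine le_trans (hvol α) ?_
      refine le_trans (ENNReal.ofReal_le_ofReal ?_) ENNReal.ofReal_add_le
      have := le_max_left (r * |Real.cos (α - β)| - r * Real.sin ε) 0
      simp only [hhdef]
      linarith
    · have hnA : α ∉ A := fun hx => hmem (subset_toMeasurable _ _ hx)
      have hempty : proj α U ∩ proj α b = ∅ := by
        by_contra hne
        exact hnA ⟨hα, nonempty_iff_ne_empty.2 hne⟩
      rw [inter_comm] at hempty
      rw [hempty]
      simp
  -- main estimate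
  calc (∫⁻ α in Ico 0 (2 * Real.pi), volume (proj α b ∩ proj α U))
      ≤ ∫⁻ α in Ico 0 (2 * Real.pi),
          (A'.indicator (fun _ => ENNReal.ofReal (r * Real.sin ε)) α + ENNReal.ofReal (h α)) := by
        refine lintegral_mono_ae ?_
        filter_upwards [ae_restrict_mem measurableSet_Ico] with α hα using key α hα
    _ = (∫⁻ α in Ico 0 (2 * Real.pi),
          A'.indicator (fun _ => ENNReal.ofReal (r * Real.sin ε)) α)
        + ∫⁻ α in Ico 0 (2 * Real.pi), ENNReal.ofReal (h α) := by
        apply lintegral_add_left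
        exact measurable_const.indicator hA'meas
    _ ≤ ENNReal.ofReal (r * Real.sin ε) * ENNReal.ofReal (2 * Real.pi - 4 * ε)
        + ENNReal.ofReal (4 * r * Real.cos ε - (2 * Real.pi - 4 * ε) * (r * Real.sin ε)) := by
        gcongr
        · -- indicator part
          rw [lintegral_indicator hA'meas, setLIntegral_const,
            Measure.restrict_apply hA'meas]
          refine le_trans (mul_le_mul_right (measure_mono inter_subset_left) _) ?_
          rw [hA'vol]
          exact mul_le_mul_right hA _
        · -- bathtub part
          have hIcoIoc : (∫⁻ α in Ico 0 (2 * Real.pi), ENNReal.ofReal (h α))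
              = ∫⁻ α in Ioc 0 (2 * Real.pi), ENNReal.ofReal (h α) := by
            exact setLIntegral_congr Ico_ae_eq_Ioc
          rw [hIcoIoc]
          have hinteg : IntegrableOn h (Ioc 0 (2 * Real.pi)) volume :=
            (hcont.integrableOn_Icc).mono_set Ioc_subset_Icc_self
          rw [← ofReal_integral_eq_lintegral_ofReal hinteg
            (Filter.Eventually.of_forall fun t => le_max_right _ _)]
          apply ENNReal.ofReal_le_ofReal
          rw [← intervalIntegral.integral_of_le (by linarith)]
          rw [bathtub' r β ε hr0 ⟨hε0, hε2⟩]
    _ ≤ ENNReal.ofReal (4 * r * Real.cos ε) := by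
        have h2π : 0 ≤ 2 * Real.pi - 4 * ε := by linarith
        have hc2 : 0 ≤ 4 * r * Real.cos ε - (2 * Real.pi - 4 * ε) * (r * Real.sin ε) := by
          rw [← bathtub' r β ε hr0 ⟨hε0, hε2⟩]
          apply intervalIntegral.integral_nonneg (by linarith)
          intro t _
          exact le_max_right _ _
        rw [← ENNReal.ofReal_mul (by positivity), ← ENNReal.ofReal_add (by positivity) hc2]
        apply ENNReal.ofReal_le_ofReal
        nlinarith [hsε, hr0, h2π]
end
end

section
/- Let s < t be reals, let D > 0 and w > 0, and let f̲, g̲ : [s, t] → ℝ be (D/2)-Lipschitz functions satisfying g̲(s) ≥ f̲(s) + w and f̲(t) ≥ g̲(t) + w. Define R_f := {(α, v) : α ∈ [s, t], f̲(α) ≤ v ≤ f̲(α) + w} and R_g := {(α, v) : α ∈ [s, t], g̲(α) ≤ v ≤ g̲(α) + w}. Then the two-dimensional Lebesgue measure of R_f ∩ R_g is at least w²/D. -/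
open MeasureTheory Set
open scoped ENNReal NNReal

noncomputable section

/-- Two bands of width `w` over `[s, t]` with `(D/2)`-Lipschitz lower endpoint
functions, one starting at least `w` above the other and ending at least `w`
below it, overlap in a set of area at least `w²/D`. -/
theorem crossing_bands_overlap_ge
    (s t : ℝ) (hst : s < t) (D w : ℝ) (hD : 0 < D) (hw : 0 < w)
    (f g : ℝ → ℝ)
    (hf : ∀ x ∈ Icc s t, ∀ y ∈ Icc s t, |f x - f y| ≤ D / 2 * |x - y|)
    (hg : ∀ x ∈ Icc s t, ∀ y ∈ Icc s t, |g x - g y| ≤ D / 2 * |x - y|)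
    (h₁ : f s + w ≤ g s) (h₂ : g t + w ≤ f t) :
    ENNReal.ofReal (w ^ 2 / D) ≤
      volume ({q : ℝ × ℝ | q.1 ∈ Icc s t ∧ q.2 ∈ Icc (f q.1) (f q.1 + w)} ∩
              {q : ℝ × ℝ | q.1 ∈ Icc s t ∧ q.2 ∈ Icc (g q.1) (g q.1 + w)}) := by
  have hDhalf : (0:ℝ) ≤ D / 2 := by positivity
  -- continuity of f and g on [s,t]
  have hfL : LipschitzOnWith (D/2).toNNReal f (Icc s t) := by
    apply LipschitzOnWith.of_dist_le_mul
    intro x hx y hy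
    rw [Real.dist_eq, Real.dist_eq, Real.coe_toNNReal _ hDhalf]
    exact hf x hx y hy
  have hgL : LipschitzOnWith (D/2).toNNReal g (Icc s t) := by
    apply LipschitzOnWith.of_dist_le_mul
    intro x hx y hy
    rw [Real.dist_eq, Real.dist_eq, Real.coe_toNNReal _ hDhalf]
    exact hg x hx y hy
  have hfc : ContinuousOn f (Icc s t) := hfL.continuousOn
  have hgc : ContinuousOn g (Icc s t) := hgL.continuousOn
  -- D-Lipschitz bound for g - f
  have hh : ∀ x ∈ Icc s t, ∀ y ∈ Icc s t,
      |(g x - f x) - (g y - f y)| ≤ D * |x - y| := by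
    intro x hx y hy
    have := hf x hx y hy
    have := hg x hx y hy
    calc |(g x - f x) - (g y - f y)| = |(g x - g y) + -(f x - f y)| := by ring_nf
      _ ≤ |g x - g y| + |-(f x - f y)| := abs_add_le _ _
      _ ≤ D / 2 * |x - y| + D / 2 * |x - y| := by rw [abs_neg]; linarith
      _ = D * |x - y| := by ring
  -- intermediate value: there is α with f α = g α
  have hsmem : s ∈ Icc s t := left_mem_Icc.2 hst.le
  have htmem : t ∈ Icc s t := right_mem_Icc.2 hst.le
  obtain ⟨α, hαmem, hα⟩ : ∃ α ∈ Icc s t, g α - f α = 0 := by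
    have hcont : ContinuousOn (fun x => g x - f x) (Icc s t) := hgc.sub hfc
    have h0 : (0:ℝ) ∈ Icc (g t - f t) (g s - f s) := ⟨by linarith, by linarith⟩
    obtain ⟨α, hαmem, hα⟩ := intermediate_value_Icc' hst.le hcont h0
    exact ⟨α, hαmem, hα⟩
  set r := w / D with hrdef
  have hr0 : 0 < r := div_pos hw hD
  have hrD : D * r = w := by rw [hrdef]; field_simp
  -- α is at distance at least r from both endpoints
  have hs' : s ≤ α - r := by
    have h3 := hh s hsmem α hαmem
    have h4 : |s - α| = α - s := by
      rw [abs_of_nonpos (by linarith [hαmem.1])]; ring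
    rw [hα, h4, sub_zero] at h3
    have h5 : w ≤ D * (α - s) := le_trans (by linarith [le_abs_self (g s - f s)]) h3
    have : r ≤ α - s := by
      rw [hrdef, div_le_iff₀ hD]; linarith
    linarith
  have ht' : α + r ≤ t := by
    have h3 := hh t htmem α hαmem
    have h4 : |t - α| = t - α := by
      rw [abs_of_nonneg (by linarith [hαmem.2])]
    rw [hα, h4, sub_zero] at h3
    have h5 : w ≤ D * (t - α) := by
      have := neg_abs_le (g t - f t)
      linarith [le_abs_self (-(g t - f t)), abs_neg (g t - f t)]
    have : r ≤ t - α := by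
      rw [hrdef, div_le_iff₀ hD]; linarith
    linarith
  set I : Set ℝ := Icc (α - r) (α + r) with hIdef
  have hIsub : I ⊆ Icc s t := Icc_subset_Icc hs' ht'
  set F : ℝ → ℝ := fun x => max (f x) (g x) with hFdef
  set G : ℝ → ℝ := fun x => min (f x) (g x) + w with hGdef
  -- pointwise bound on I
  have hbound : ∀ x ∈ I, w - D * |x - α| ≤ G x - F x := by
    intro x hx
    have hxst := hIsub hx
    have h3 := hh x hxst α hαmem
    rw [hα, sub_zero] at h3
    have habs : |f x - g x| ≤ D * |x - α| := by
      rw [show f x - g x = -((g x - f x)) by ring, abs_neg]; exact h3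
    have : G x - F x = w - |f x - g x| := by
      rcases le_total (f x) (g x) with h | h
      · have e1 : F x = g x := max_eq_right h
        have e2 : G x = f x + w := by
          have : f x ⊓ g x = f x := min_eq_left h
          show f x ⊓ g x + w = f x + w
          rw [this]
        rw [e1, e2, abs_of_nonpos (by linarith : f x - g x ≤ 0)]; ring
      · have e1 : F x = f x := max_eq_left h
        have e2 : G x = g x + w := by
          have : f x ⊓ g x = g x := min_eq_right h
          show f x ⊓ g x + w = g x + w
          rw [this]
        rw [e1, e2, abs_of_nonneg (by linarith : 0 ≤ f x - g x)]; ring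
    rw [this]
    linarith
  have hFG : ∀ x ∈ I, F x ≤ G x := by
    intro x hx
    have h1 := hbound x hx
    have h2 : |x - α| ≤ r := by
      rw [abs_le]; constructor <;> [linarith [hx.1]; linarith [hx.2]]
    nlinarith [abs_nonneg (x - α)]
  -- integrability
  have hFc : ContinuousOn F I := ((hfc.mono hIsub).sup (hgc.mono hIsub))
  have hGc : ContinuousOn G I := ((hfc.mono hIsub).inf (hgc.mono hIsub)).add continuousOn_const
  have hFint : IntegrableOn F I := hFc.integrableOn_Icc
  have hGint : IntegrableOn G I := hGc.integrableOn_Icc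
  -- region between F and G over I is inside the target set
  have hsubset : regionBetween F G I ⊆
      ({q : ℝ × ℝ | q.1 ∈ Icc s t ∧ q.2 ∈ Icc (f q.1) (f q.1 + w)} ∩
       {q : ℝ × ℝ | q.1 ∈ Icc s t ∧ q.2 ∈ Icc (g q.1) (g q.1 + w)}) := by
    rintro ⟨x, v⟩ ⟨hx, hv⟩
    have hxst := hIsub hx
    simp only [regionBetween, mem_setOf_eq, mem_Ioo] at hv ⊢
    obtain ⟨hv1, hv2⟩ := hv
    have hF1 : f x ≤ F x := le_max_left _ _
    have hF2 : g x ≤ F x := le_max_right _ _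
    have hG1 : G x ≤ f x + w := by have := min_le_left (f x) (g x); show f x ⊓ g x + w ≤ f x + w; linarith
    have hG2 : G x ≤ g x + w := by have := min_le_right (f x) (g x); show f x ⊓ g x + w ≤ g x + w; linarith
    exact ⟨⟨hxst, le_of_lt (lt_of_le_of_lt hF1 hv1), le_of_lt (lt_of_lt_of_le hv2 hG1)⟩,
           ⟨hxst, le_of_lt (lt_of_le_of_lt hF2 hv1), le_of_lt (lt_of_lt_of_le hv2 hG2)⟩⟩
  -- volume of the region between
  have hvol : volume (regionBetween F G I) = ENNReal.ofReal (∫ y in I, (G - F) y) := by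
    rw [Measure.volume_eq_prod]
    exact volume_regionBetween_eq_integral hFint hGint measurableSet_Icc hFG
  -- the lower-bound integrand
  have htri_int : IntegrableOn (fun x => w - D * |x - α|) I := by
    apply ContinuousOn.integrableOn_Icc
    exact continuousOn_const.sub (continuousOn_const.mul
      ((continuous_id.sub continuous_const).abs.continuousOn))
  have hmono : ∫ x in I, (w - D * |x - α|) ≤ ∫ y in I, (G - F) y := by
    apply setIntegral_mono_on htri_int (hGint.sub hFint) measurableSet_Icc
    intro x hx
    simpa using hbound x hx
  -- compute the triangle integral
  have hcalc : ∫ x in I, (w - D * |x - α|) = w ^ 2 / D := by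
    rw [hIdef, integral_Icc_eq_integral_Ioc,
      ← intervalIntegral.integral_of_le (by linarith : α - r ≤ α + r)]
    have habs_cont : Continuous (fun x : ℝ => w - D * |x - α|) :=
      continuous_const.sub (continuous_const.mul ((continuous_id.sub continuous_const).abs))
    have hL : ∫ x in (α - r)..α, (w - D * |x - α|) = ∫ x in (α - r)..α, (w - D * (α - x)) := by
      apply intervalIntegral.integral_congr
      intro x hx
      rw [uIcc_of_le (by linarith)] at hx
      show w - D * |x - α| = w - D * (α - x)
      rw [abs_of_nonpos (by linarith [hx.2])]
      ring_nf
    have hR : ∫ x in α..(α + r), (w - D * |x - α|) = ∫ x in α..(α + r), (w - D * (x - α)) := by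
      apply intervalIntegral.integral_congr
      intro x hx
      rw [uIcc_of_le (by linarith)] at hx
      show w - D * |x - α| = w - D * (x - α)
      rw [abs_of_nonneg (by linarith [hx.1])]
    have hsplit : ∫ x in (α - r)..(α + r), (w - D * |x - α|)
        = (∫ x in (α - r)..α, (w - D * |x - α|)) + ∫ x in α..(α + r), (w - D * |x - α|) := by
      rw [intervalIntegral.integral_add_adjacent_intervals
        (habs_cont.intervalIntegrable _ _) (habs_cont.intervalIntegrable _ _)]
    rw [hsplit, hL, hR]
    have e1 : ∫ x in (α - r)..α, (w - D * (α - x)) = w * r - D * r ^ 2 / 2 := by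
      have : (fun x => w - D * (α - x)) = fun x => (w - D * α) + D * x := by
        funext x; ring
      rw [this, intervalIntegral.integral_add intervalIntegrable_const
        (IntervalIntegrable.const_mul intervalIntegral.intervalIntegrable_id D), intervalIntegral.integral_const,
        intervalIntegral.integral_const_mul, integral_id, smul_eq_mul]
      ring
    have e2 : ∫ x in α..(α + r), (w - D * (x - α)) = w * r - D * r ^ 2 / 2 := by
      have : (fun x => w - D * (x - α)) = fun x => (w + D * α) + (-D) * x := by
        funext x; ring
      rw [this, intervalIntegral.integral_add intervalIntegrable_const
        (IntervalIntegrable.const_mul intervalIntegral.intervalIntegrable_id (-D)), intervalIntegral.integral_const,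
        intervalIntegral.integral_const_mul, integral_id, smul_eq_mul]
      ring
    rw [e1, e2, hrdef]
    field_simp
    ring
  calc ENNReal.ofReal (w ^ 2 / D) = ENNReal.ofReal (∫ x in I, (w - D * |x - α|)) := by
        rw [hcalc]
    _ ≤ ENNReal.ofReal (∫ y in I, (G - F) y) := ENNReal.ofReal_le_ofReal hmono
    _ = volume (regionBetween F G I) := hvol.symm
    _ ≤ _ := measure_mono hsubset
end
end

section
/- Let U ⊆ ℝ² be a compact convex set with nonempty interior and perimeter p (the one-dimensional Hausdorff measure of its topological boundary). Then every rectifiable half-line barrier B for U satisfies |B| ≥ p, i.e., the one-dimensional Hausdorff measure of B is at least the full perimeter of U. -/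
open MeasureTheory Set
open scoped ENNReal NNReal RealInnerProductSpace

noncomputable section

/-- A half-line (ray) in ℝ²: the set {p + t·v : t ≥ 0} for some point p and
nonzero vector v. -/
def IsRay (L : Set Plane) : Prop :=
  ∃ p v : Plane, v ≠ 0 ∧ L = {x | ∃ t : ℝ, 0 ≤ t ∧ x = p + t • v}

/-- `B` is a half-line barrier for `U`: every ray meeting `U` meets `B`. -/
def IsRayBarrier (B U : Set Plane) : Prop :=
  ∀ L : Set Plane, IsRay L → (L ∩ U).Nonempty → (L ∩ B).Nonempty

/-- Existence of the metric projection onto a nonempty closed convex set,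
with the variational inequality. -/
lemma exists_proj_aux (U : Set Plane) (hne : U.Nonempty) (hconv : Convex ℝ U)
    (hcl : IsClosed U) :
    ∃ pr : Plane → Plane, ∀ u, pr u ∈ U ∧ ∀ w ∈ U, ⟪u - pr u, w - pr u⟫ ≤ 0 := by
  have h : ∀ u : Plane, ∃ v, v ∈ U ∧ ∀ w ∈ U, ⟪u - v, w - v⟫ ≤ 0 := by
    intro u
    obtain ⟨v, hvU, hv⟩ := exists_norm_eq_iInf_of_complete_convex hne hcl.isComplete hconv u
    exact ⟨v, hvU, (norm_eq_iInf_iff_real_inner_le_zero hconv hvU).mp hv⟩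
  choose pr h1 h2 using h
  exact ⟨pr, fun u => ⟨h1 u, h2 u⟩⟩

/-- Key inequality: two points satisfying variational inequalities. -/
lemma proj_contract {U : Set Plane} {a b pa pb : Plane}
    (hpa : pa ∈ U) (hpb : pb ∈ U)
    (ha : ∀ w ∈ U, ⟪a - pa, w - pa⟫ ≤ 0) (hb : ∀ w ∈ U, ⟪b - pb, w - pb⟫ ≤ 0) :
    ‖pa - pb‖ ≤ ‖a - b‖ := by
  have h1 := ha pb hpb
  have h2 := hb pa hpa
  have key : ‖pa - pb‖ ^ 2 ≤ ⟪a - b, pa - pb⟫ := by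
    have : ⟪a - pa, pb - pa⟫ + ⟪b - pb, pa - pb⟫ ≤ 0 := by linarith
    have expand : ⟪a - pa, pb - pa⟫ + ⟪b - pb, pa - pb⟫
        = -⟪a - b, pa - pb⟫ + ‖pa - pb‖ ^ 2 := by
      rw [← real_inner_self_eq_norm_sq]
      have e1 : (a - pa : Plane) = (a - b) + (b - pb) + (pb - pa) := by abel
      rw [e1, inner_add_left, inner_add_left]
      have e2 : ⟪pb - pa, pb - pa⟫ = ⟪pa - pb, pa - pb⟫ := by
        rw [← neg_sub pa pb, inner_neg_neg]
      have e3 : ⟪(b : Plane) - pb, pb - pa⟫ = -⟪b - pb, pa - pb⟫ := by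
        rw [← neg_sub pa pb, inner_neg_right]
      have e4 : ⟪(a : Plane) - b, pb - pa⟫ = -⟪a - b, pa - pb⟫ := by
        rw [← neg_sub pa pb, inner_neg_right]
      rw [e2, e3, e4]; ring
    linarith [expand ▸ this]
  have cs : ⟪a - b, pa - pb⟫ ≤ ‖a - b‖ * ‖pa - pb‖ := real_inner_le_norm _ _
  nlinarith [norm_nonneg (pa - pb), norm_nonneg (a - b)]

/-- Any rectifiable half-line barrier of a compact convex set with nonempty
interior has length at least the full perimeter. -/
theorem ray_barrier_length_ge_perimeter
    (U : Set Plane) (hUcomp : IsCompact U) (hUconv : Convex ℝ U)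
    (hUint : (interior U).Nonempty) (p : ℝ≥0∞)
    (hp : μH[1] (frontier U) = p)
    (B : Set Plane) (hBrect : IsRectifiableSet B) (hBbar : IsRayBarrier B U) :
    p ≤ μH[1] B := by
  have hUcl : IsClosed U := hUcomp.isClosed
  have hUne : U.Nonempty := hUint.mono interior_subset
  obtain ⟨pr, hpr⟩ := exists_proj_aux U hUne hUconv hUcl
  -- pr is 1-Lipschitz
  have hlip : LipschitzWith 1 pr := by
    intro a b
    rw [edist_dist, edist_dist, ENNReal.coe_one, one_mul]
    apply ENNReal.ofReal_le_ofReal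
    rw [dist_eq_norm, dist_eq_norm]
    exact proj_contract (hpr a).1 (hpr b).1 (hpr a).2 (hpr b).2
  -- frontier U ⊆ pr '' B
  have hsub : frontier U ⊆ pr '' B := by
    intro x hx
    have hxU : x ∈ U := by
      rw [← hUcl.closure_eq]; exact hx.1
    have hxnotint : x ∉ interior U := hx.2
    -- supporting functional
    obtain ⟨f, hf⟩ := geometric_hahn_banach_open_point (hUconv.interior) isOpen_interior hxnotint
    -- f w ≤ f x for all w ∈ U
    have hfU : ∀ w ∈ U, f w ≤ f x := by
      intro w hw
      obtain ⟨y, hy⟩ := hUint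
      have key : ∀ t : ℝ, t ∈ Ioc (0:ℝ) 1 → f w + t * (f y - f w) < f x := by
        intro t ht
        have h := hf _ (hUconv.add_smul_sub_mem_interior hw hy ht)
        have e : f (w + t • (y - w)) = f w + t * (f y - f w) := by
          rw [f.map_add, f.map_smul, f.map_sub, smul_eq_mul]
        rw [e] at h
        exact h
      by_contra hlt
      push_neg at hlt
      have hd : (0:ℝ) < f w - f x := by linarith
      set D := |f y - f w| with hD
      have hD0 : 0 ≤ D := abs_nonneg _
      set t := min 1 ((f w - f x) / (2 * (1 + D))) with htdef
      have ht0 : 0 < t := lt_min one_pos (by positivity)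
      have ht1 : t ≤ 1 := min_le_left _ _
      have hkey := key t ⟨ht0, ht1⟩
      have h1 : -(t * D) ≤ t * (f y - f w) := by
        have := neg_abs_le (f y - f w)
        nlinarith
      have h2 : t * D ≤ (f w - f x) / 2 := by
        have ht2 : t ≤ (f w - f x) / (2 * (1 + D)) := min_le_right _ _
        have hmul : t * D ≤ (f w - f x) / (2 * (1 + D)) * D :=
          mul_le_mul_of_nonneg_right ht2 hD0
        have hden : 0 < 2 * (1 + D) := by positivity
        have hlast : (f w - f x) / (2 * (1 + D)) * D ≤ (f w - f x) / 2 := by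
          rw [div_mul_eq_mul_div, div_le_div_iff₀ hden two_pos]
          nlinarith
        linarith
      linarith
    -- the representing vector
    set n := (InnerProductSpace.toDual ℝ Plane).symm f with hn
    have hinner : ∀ z : Plane, ⟪n, z⟫ = f z := by
      intro z
      simp [hn, InnerProductSpace.toDual_symm_apply]
    have hnne : n ≠ 0 := by
      obtain ⟨y, hy⟩ := hUint
      intro h0
      have : f y < f x := hf y hy
      have hy' : ⟪n, y⟫ = 0 := by rw [h0]; simp
      have hx' : ⟪n, x⟫ = 0 := by rw [h0]; simp
      rw [← hinner y, ← hinner x, hy', hx'] at this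
      exact lt_irrefl _ this
    -- the outward ray from x
    set L : Set Plane := {z | ∃ t : ℝ, 0 ≤ t ∧ z = x + t • n} with hL
    have hray : IsRay L := ⟨x, n, hnne, rfl⟩
    have hmeet : (L ∩ U).Nonempty := ⟨x, ⟨0, le_refl 0, by simp⟩, hxU⟩
    obtain ⟨b, hbL, hbB⟩ := hBbar L hray hmeet
    obtain ⟨t, ht0, hbt⟩ := hbL
    -- pr b = x
    have hprb : pr b = x := by
      have hub : ∀ w ∈ U, ⟪b - x, w - x⟫ ≤ 0 := by
        intro w hw
        rw [hbt]
        have : (x + t • n - x : Plane) = t • n := by abel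
        rw [this, real_inner_smul_left]
        have : ⟪n, w - x⟫ = f w - f x := by rw [hinner, map_sub]
        rw [this]
        have : f w - f x ≤ 0 := by linarith [hfU w hw]
        exact mul_nonpos_of_nonneg_of_nonpos ht0 this
      -- uniqueness via proj_contract with a = b
      have h := proj_contract (hpr b).1 hxU (hpr b).2 hub (a := b) (b := b)
      simp only [sub_self, norm_zero] at h
      have : pr b - x = 0 := norm_le_zero_iff.mp h
      exact sub_eq_zero.mp this
    exact ⟨b, hbB, hprb⟩
  calc p = μH[1] (frontier U) := hp.symm
    _ ≤ μH[1] (pr '' B) := measure_mono hsub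
    _ ≤ (1:ℝ≥0) ^ (1:ℝ) * μH[1] B := hlip.hausdorffMeasure_image_le zero_le_one B
    _ = μH[1] B := by simp
end
end

section
/- Let ε ∈ [0, π/2] and let A ⊆ [0, 2π] be a Lebesgue-measurable set with measure at most 2π − 4ε. Then for every θ ∈ ℝ, ∫_A |cos(α − θ)| dα ≤ 4·cos ε. -/
open MeasureTheory Set
open scoped ENNReal NNReal

noncomputable section

/-- For `ε ∈ [0, π/2]` and a measurable set `A ⊆ [0, 2π]` of measure at most
`2π − 4ε`, the integral of `|cos(α − θ)|` over `A` is at most `4·cos ε`. -/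
theorem integral_abs_cos_le
    (ε : ℝ) (hε : ε ∈ Icc 0 (Real.pi / 2))
    (A : Set ℝ) (hA : A ⊆ Icc 0 (2 * Real.pi)) (hAm : MeasurableSet A)
    (hμ : volume A ≤ ENNReal.ofReal (2 * Real.pi - 4 * ε)) (θ : ℝ) :
    (∫ α in A, |Real.cos (α - θ)|) ≤ 4 * Real.cos ε := by
  obtain ⟨hε0, hε2⟩ := hε
  have hπ := Real.pi_pos
  set s := Real.sin ε with hs
  set c := Real.cos ε with hc
  have hs0 : 0 ≤ s := Real.sin_nonneg_of_nonneg_of_le_pi hε0 (by linarith)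
  set f : ℝ → ℝ := fun x => max (|Real.cos x| - s) 0 with hf
  have hfc : Continuous f :=
    ((Real.continuous_cos.abs).sub continuous_const).max continuous_const
  have hfnn : ∀ x, 0 ≤ f x := fun x => le_max_right _ _
  have hfle : ∀ x, |Real.cos x| ≤ f x + s := fun x => by
    have h := le_max_left (|Real.cos x| - s) 0
    simp only [hf]; linarith
  -- helper 1 : s ≤ cos y for |y| ≤ π/2 - ε
  have help1 : ∀ y : ℝ, |y| ≤ Real.pi / 2 - ε → s ≤ Real.cos y := by
    intro y hy
    have h1 : Real.cos (Real.pi / 2 - ε) ≤ Real.cos |y| :=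
      Real.cos_le_cos_of_nonneg_of_le_pi (abs_nonneg y) (by linarith) hy
    rwa [Real.cos_pi_div_two_sub, Real.cos_abs] at h1
  -- helper 2 : |cos y| ≤ s for π/2 - ε ≤ y ≤ π/2 + ε
  have help2 : ∀ y : ℝ, Real.pi / 2 - ε ≤ y → y ≤ Real.pi / 2 + ε → |Real.cos y| ≤ s := by
    intro y hy1 hy2
    have h1 : Real.cos y ≤ Real.cos (Real.pi / 2 - ε) :=
      Real.cos_le_cos_of_nonneg_of_le_pi (by linarith) (by linarith) hy1
    have h2 : Real.cos (Real.pi / 2 + ε) ≤ Real.cos y :=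
      Real.cos_le_cos_of_nonneg_of_le_pi (by linarith) (by linarith) hy2
    rw [Real.cos_pi_div_two_sub] at h1
    rw [show Real.pi / 2 + ε = Real.pi / 2 - (-ε) by ring, Real.cos_pi_div_two_sub,
      Real.sin_neg] at h2
    rw [abs_le]; exact ⟨by linarith, by linarith⟩
  have hi : ∀ a b : ℝ, IntervalIntegrable f volume a b := fun a b =>
    hfc.intervalIntegrable a b
  have hcosint : ∀ a b : ℝ, IntervalIntegrable Real.cos volume a b := fun a b =>
    Real.continuous_cos.intervalIntegrable a b
  -- piece integrals
  have I1 : ∫ x in (0:ℝ)..(Real.pi / 2 - ε), f x = c - s * (Real.pi / 2 - ε) := by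
    have heq : EqOn f (fun x => Real.cos x - s) (uIcc 0 (Real.pi / 2 - ε)) := by
      intro x hx
      rw [uIcc_of_le (by linarith)] at hx
      obtain ⟨hx1, hx2⟩ := hx
      have h1 : s ≤ Real.cos x := help1 x (by rw [abs_of_nonneg hx1]; exact hx2)
      have h2 : 0 ≤ Real.cos x := le_trans hs0 h1
      simp only [hf, abs_of_nonneg h2]
      exact max_eq_left (by linarith)
    rw [intervalIntegral.integral_congr heq,
      intervalIntegral.integral_sub (hcosint _ _) intervalIntegrable_const,
      integral_cos, intervalIntegral.integral_const]
    rw [Real.sin_pi_div_two_sub, Real.sin_zero]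
    simp [hc]; ring
  have I2 : ∫ x in (Real.pi / 2 - ε)..(Real.pi / 2 + ε), f x = 0 := by
    have heq : EqOn f (fun _ => (0:ℝ)) (uIcc (Real.pi / 2 - ε) (Real.pi / 2 + ε)) := by
      intro x hx
      rw [uIcc_of_le (by linarith)] at hx
      obtain ⟨hx1, hx2⟩ := hx
      have := help2 x hx1 hx2
      simp only [hf]
      exact max_eq_right (by linarith)
    rw [intervalIntegral.integral_congr heq]; simp
  have I3 : ∫ x in (Real.pi / 2 + ε)..(3 * Real.pi / 2 - ε), f x
      = 2 * c - s * (Real.pi - 2 * ε) := by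
    have heq : EqOn f (fun x => -(Real.cos x + s))
        (uIcc (Real.pi / 2 + ε) (3 * Real.pi / 2 - ε)) := by
      intro x hx
      rw [uIcc_of_le (by linarith)] at hx
      obtain ⟨hx1, hx2⟩ := hx
      have h1 : s ≤ Real.cos (x - Real.pi) := by
        apply help1
        rw [abs_le]
        exact ⟨by linarith, by linarith⟩
      rw [Real.cos_sub_pi] at h1
      have h2 : Real.cos x ≤ 0 := by linarith
      simp only [hf, abs_of_nonpos h2]
      rw [max_eq_left (by linarith)]; ring
    rw [intervalIntegral.integral_congr heq, intervalIntegral.integral_neg,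
      intervalIntegral.integral_add (hcosint _ _) intervalIntegrable_const,
      integral_cos, intervalIntegral.integral_const]
    have e1 : Real.sin (3 * Real.pi / 2 - ε) = -c := by
      rw [show 3 * Real.pi / 2 - ε = (Real.pi / 2 - ε) + Real.pi by ring,
        Real.sin_add_pi, Real.sin_pi_div_two_sub, hc]
    have e2 : Real.sin (Real.pi / 2 + ε) = c := by
      rw [show Real.pi / 2 + ε = Real.pi - (Real.pi / 2 - ε) by ring,
        Real.sin_pi_sub, Real.sin_pi_div_two_sub, hc]
    rw [e1, e2]; simp; ring
  have I4 : ∫ x in (3 * Real.pi / 2 - ε)..(3 * Real.pi / 2 + ε), f x = 0 := by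
    have heq : EqOn f (fun _ => (0:ℝ))
        (uIcc (3 * Real.pi / 2 - ε) (3 * Real.pi / 2 + ε)) := by
      intro x hx
      rw [uIcc_of_le (by linarith)] at hx
      obtain ⟨hx1, hx2⟩ := hx
      have h1 : |Real.cos (x - Real.pi)| ≤ s := by
        apply help2 <;> linarith
      rw [Real.cos_sub_pi, abs_neg] at h1
      simp only [hf]
      exact max_eq_right (by linarith)
    rw [intervalIntegral.integral_congr heq]; simp
  have I5 : ∫ x in (3 * Real.pi / 2 + ε)..(2 * Real.pi), f x
      = c - s * (Real.pi / 2 - ε) := by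
    have heq : EqOn f (fun x => Real.cos x - s)
        (uIcc (3 * Real.pi / 2 + ε) (2 * Real.pi)) := by
      intro x hx
      rw [uIcc_of_le (by linarith)] at hx
      obtain ⟨hx1, hx2⟩ := hx
      have h1 : s ≤ Real.cos (x - 2 * Real.pi) := by
        apply help1
        rw [abs_le]
        exact ⟨by linarith, by linarith⟩
      rw [Real.cos_sub_two_pi] at h1
      have h2 : 0 ≤ Real.cos x := le_trans hs0 h1
      simp only [hf, abs_of_nonneg h2]
      exact max_eq_left (by linarith)
    rw [intervalIntegral.integral_congr heq,
      intervalIntegral.integral_sub (hcosint _ _) intervalIntegrable_const,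
      integral_cos, intervalIntegral.integral_const]
    have e2 : Real.sin (3 * Real.pi / 2 + ε) = -c := by
      rw [show 3 * Real.pi / 2 + ε = (Real.pi / 2 + ε) + Real.pi by ring,
        Real.sin_add_pi, show Real.pi / 2 + ε = Real.pi - (Real.pi / 2 - ε) by ring,
        Real.sin_pi_sub, Real.sin_pi_div_two_sub, hc]
    rw [Real.sin_two_pi, e2]; simp; ring
  -- full period integral
  have key : ∫ x in (0:ℝ)..(2 * Real.pi), f x
      = 4 * c - 4 * s * (Real.pi / 2 - ε) := by
    have h1 := intervalIntegral.integral_add_adjacent_intervals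
      (hi 0 (Real.pi / 2 - ε)) (hi (Real.pi / 2 - ε) (Real.pi / 2 + ε))
    have h2 := intervalIntegral.integral_add_adjacent_intervals
      (hi 0 (Real.pi / 2 + ε)) (hi (Real.pi / 2 + ε) (3 * Real.pi / 2 - ε))
    have h3 := intervalIntegral.integral_add_adjacent_intervals
      (hi 0 (3 * Real.pi / 2 - ε)) (hi (3 * Real.pi / 2 - ε) (3 * Real.pi / 2 + ε))
    have h4 := intervalIntegral.integral_add_adjacent_intervals
      (hi 0 (3 * Real.pi / 2 + ε)) (hi (3 * Real.pi / 2 + ε) (2 * Real.pi))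
    rw [← h4, ← h3, ← h2, ← h1, I1, I2, I3, I4, I5]
    ring
  -- periodicity and translation
  have hper : Function.Periodic f (2 * Real.pi) := by
    intro x; simp only [hf, Real.cos_add_two_pi]
  have trans : ∫ α in (0:ℝ)..(2 * Real.pi), f (α - θ)
      = ∫ x in (0:ℝ)..(2 * Real.pi), f x := by
    rw [intervalIntegral.integral_comp_sub_right f θ]
    have := hper.intervalIntegral_add_eq (0 - θ) 0
    simpa [zero_add, zero_sub, sub_eq_add_neg, add_comm] using this
  -- integrability facts
  have hFc : Continuous fun α => f (α - θ) := hfc.comp (continuous_id.sub continuous_const)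
  have hFIcc : IntegrableOn (fun α => f (α - θ)) (Icc 0 (2 * Real.pi)) volume :=
    hFc.integrableOn_Icc
  have hFA : IntegrableOn (fun α => f (α - θ)) A volume := hFIcc.mono_set hA
  have hGA : IntegrableOn (fun α => |Real.cos (α - θ)|) A volume :=
    ((Real.continuous_cos.comp
      (continuous_id.sub continuous_const)).abs.integrableOn_Icc).mono_set hA
  have hμA : (volume A).toReal ≤ 2 * Real.pi - 4 * ε :=
    ENNReal.toReal_le_of_le_ofReal (by linarith) hμ
  have hAfin : volume A < ⊤ :=
    lt_of_le_of_lt (measure_mono hA) (by simp; exact ENNReal.mul_lt_top (by norm_num) ENNReal.ofReal_lt_top)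
  -- chain of inequalities
  have step1 : (∫ α in A, |Real.cos (α - θ)|)
      ≤ (∫ α in A, f (α - θ)) + s * (volume A).toReal := by
    have h1 : (∫ α in A, |Real.cos (α - θ)|) ≤ ∫ α in A, (f (α - θ) + s) := by
      apply setIntegral_mono_on hGA (hFA.add (integrableOn_const hAfin.ne)) hAm
      intro x _; exact hfle _
    have h2 : (∫ α in A, (f (α - θ) + s))
        = (∫ α in A, f (α - θ)) + s * (volume A).toReal := by
      rw [integral_add hFA (integrableOn_const hAfin.ne), setIntegral_const]
      simp [mul_comm, Measure.real]
    linarith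
  have step2 : (∫ α in A, f (α - θ)) ≤ ∫ α in Icc 0 (2 * Real.pi), f (α - θ) := by
    apply setIntegral_mono_set hFIcc
    · exact Filter.Eventually.of_forall fun x => hfnn _
    · exact Filter.Eventually.of_forall hA
  have step3 : (∫ α in Icc 0 (2 * Real.pi), f (α - θ))
      = 4 * c - 4 * s * (Real.pi / 2 - ε) := by
    rw [integral_Icc_eq_integral_Ioc,
      ← intervalIntegral.integral_of_le (by linarith : (0:ℝ) ≤ 2 * Real.pi), trans, key]
  have hμprod : s * (volume A).toReal ≤ s * (2 * Real.pi - 4 * ε) :=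
    mul_le_mul_of_nonneg_left hμA hs0
  have final : 4 * c - 4 * s * (Real.pi / 2 - ε) + s * (2 * Real.pi - 4 * ε) = 4 * c := by
    ring
  linarith
end
end

section
/- Let S = [−1/2, 1/2]² and let O be the octagon obtained by attaching to each edge of S an isosceles triangle of height 29/590 erected outward on that edge (so O is the convex hull of S together with the four points (0, 1/2 + 29/590), (0, −1/2 − 29/590), (1/2 + 29/590, 0), (−1/2 − 29/590, 0)). Then for every point p = (p₁, p₂) ∈ ℝ² with p ∉ O, the set {α ∈ [0, 2π) : p₁·cos α + p₂·sin α ∈ S(α)} has Lebesgue measure at most 2π − 2·arctan(29/295). -/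
open MeasureTheory Set
open scoped ENNReal NNReal

noncomputable section

/- ### Auxiliary lemmas -/

lemma theta_pos' : 0 < Real.arctan (29/295) := by
  have := Real.arctan_strictMono (show (0:ℝ) < 29/295 by norm_num)
  rwa [Real.arctan_zero] at this

lemma theta_le_pi4' : Real.arctan (29/295) ≤ Real.pi/4 := by
  have := Real.arctan_strictMono.monotone (show (29:ℝ)/295 ≤ 1 by norm_num)
  rwa [Real.arctan_one] at this

lemma sin_arctan_eq' : Real.sin (Real.arctan (29/295))
    = (29/295) * Real.cos (Real.arctan (29/295)) := by
  have h := Real.tan_arctan (29/295 : ℝ)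
  have hc : 0 < Real.cos (Real.arctan (29/295)) := Real.cos_arctan_pos _
  rw [Real.tan_eq_sin_div_cos, div_eq_iff hc.ne'] at h
  linarith

lemma aux_trig1' {β : ℝ} (h0 : 0 ≤ β) (h1 : β ≤ Real.arctan (29/295)) :
    Real.sin β ≤ (29/295) * Real.cos β := by
  set θ := Real.arctan (29/295)
  have hc : 0 < Real.cos θ := Real.cos_arctan_pos _
  have hθπ : θ < Real.pi/2 := Real.arctan_lt_pi_div_two _
  have hs : 0 ≤ Real.sin (θ - β) := by
    apply Real.sin_nonneg_of_nonneg_of_le_pi (by linarith)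
    nlinarith [Real.pi_pos]
  rw [Real.sin_sub, sin_arctan_eq'] at hs
  nlinarith [hs, hc]

lemma aux_trig2' {β : ℝ} (h0 : Real.arctan (29/295) ≤ β) (h1 : β ≤ Real.pi/2) :
    (29/295) * Real.cos β ≤ Real.sin β := by
  set θ := Real.arctan (29/295)
  have hc : 0 < Real.cos θ := Real.cos_arctan_pos _
  have hθ0 : 0 < θ := theta_pos'
  have hs : 0 ≤ Real.sin (β - θ) := by
    apply Real.sin_nonneg_of_nonneg_of_le_pi (by linarith)
    nlinarith [Real.pi_pos]
  rw [Real.sin_sub, sin_arctan_eq'] at hs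
  nlinarith [hs, hc]

lemma core' (a b : ℝ) (ha : 0 ≤ a) (hb : 0 ≤ b)
    (hab : 162 < 295*a + 29*b ∨ 162 < 29*a + 295*b) :
    ∃ s t : ℝ, 0 ≤ s ∧ s + Real.arctan (29/295) ≤ t ∧ t ≤ Real.pi/2 ∧
      ∀ β ∈ Icc s t, (Real.cos β + Real.sin β)/2 < a * Real.cos β + b * Real.sin β := by
  set θ := Real.arctan (29/295) with hθdef
  have hθ0 : 0 < θ := theta_pos'
  have hθ4 : θ ≤ Real.pi/4 := theta_le_pi4'
  have hπ : 0 < Real.pi := Real.pi_pos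
  rcases hab with hab | hab
  · rcases le_or_gt b (1/2) with hb2 | hb2
    · refine ⟨0, θ, le_refl _, by linarith, by linarith, ?_⟩
      rintro β ⟨hβ0, hβ1⟩
      have h1 : Real.sin β ≤ (29/295) * Real.cos β := aux_trig1' hβ0 hβ1
      have hc : 0 < Real.cos β := by
        apply Real.cos_pos_of_mem_Ioo; constructor <;> nlinarith
      have hsn : 0 ≤ Real.sin β := Real.sin_nonneg_of_nonneg_of_le_pi hβ0 (by nlinarith)
      nlinarith [mul_le_mul_of_nonneg_left h1 (show (0:ℝ) ≤ 1 - 2*b by linarith), hc]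
    · refine ⟨θ, Real.pi/2, hθ0.le, by linarith, le_refl _, ?_⟩
      rintro β ⟨hβ0, hβ1⟩
      have h1 : (29/295) * Real.cos β ≤ Real.sin β := aux_trig2' hβ0 hβ1
      have hc : 0 ≤ Real.cos β := Real.cos_nonneg_of_mem_Icc ⟨by linarith, hβ1⟩
      have hsn : 0 < Real.sin β := Real.sin_pos_of_pos_of_lt_pi (by linarith) (by linarith)
      rcases eq_or_lt_of_le hc with hc0 | hc0
      · nlinarith [hc0.symm, hsn, hb2]
      · nlinarith [mul_le_mul_of_nonneg_left h1 (show (0:ℝ) ≤ 2*b - 1 by linarith), hc0]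
  · rcases le_or_gt a (1/2) with ha2 | ha2
    · refine ⟨Real.pi/2 - θ, Real.pi/2, by linarith, by linarith, le_refl _, ?_⟩
      rintro β ⟨hβ0, hβ1⟩
      have h1 : Real.sin (Real.pi/2 - β) ≤ (29/295) * Real.cos (Real.pi/2 - β) :=
        aux_trig1' (by linarith) (by linarith)
      rw [Real.sin_pi_div_two_sub, Real.cos_pi_div_two_sub] at h1
      have hc : 0 ≤ Real.cos β := Real.cos_nonneg_of_mem_Icc ⟨by linarith, hβ1⟩
      have hsn : 0 < Real.sin β := Real.sin_pos_of_pos_of_lt_pi (by linarith) (by linarith)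
      nlinarith [mul_le_mul_of_nonneg_left h1 (show (0:ℝ) ≤ 1 - 2*a by linarith), hsn]
    · refine ⟨0, Real.pi/2 - θ, le_refl _, by linarith, by linarith, ?_⟩
      rintro β ⟨hβ0, hβ1⟩
      have h1 : (29/295) * Real.cos (Real.pi/2 - β) ≤ Real.sin (Real.pi/2 - β) :=
        aux_trig2' (by linarith) (by linarith)
      rw [Real.sin_pi_div_two_sub, Real.cos_pi_div_two_sub] at h1
      have hc : 0 < Real.cos β := by
        apply Real.cos_pos_of_mem_Ioo; constructor <;> nlinarith
      have hsn : 0 ≤ Real.sin β := Real.sin_nonneg_of_nonneg_of_le_pi hβ0 (by nlinarith)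
      rcases eq_or_lt_of_le hsn with hs0 | hs0
      · nlinarith [hs0.symm, hc, ha2]
      · nlinarith [mul_le_mul_of_nonneg_left h1 (show (0:ℝ) ≤ 2*a - 1 by linarith), hs0]

lemma tri' (x y : ℝ) (hx : 1/2 < x) (hcon : 295*x + 29*|y| ≤ 162) :
    ∃ lam u m1 : ℝ, 0 ≤ lam ∧ 0 ≤ u ∧ lam + u = 1 ∧ |m1| ≤ 1/2 ∧
      lam*(162/295) + u*(1/2) = x ∧ u*m1 = y := by
  have hxle : x ≤ 162/295 := by
    have : 0 ≤ |y| := abs_nonneg y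
    linarith
  rcases eq_or_lt_of_le hxle with heq | hlt
  · refine ⟨1, 0, 0, by norm_num, le_refl _, by norm_num, by norm_num, by rw [← heq]; ring, ?_⟩
    have : |y| ≤ 0 := by rw [heq] at hcon; linarith
    have : y = 0 := abs_nonpos_iff.1 this
    simp [this]
  · set lam := (x - 1/2) * (590/29) with hlam
    set u := 1 - lam with hu
    have hu0 : 0 < u := by rw [hu, hlam]; nlinarith
    refine ⟨lam, u, y/u, by rw [hlam]; nlinarith, hu0.le, by rw [hu]; ring, ?_, ?_, ?_⟩
    · rw [abs_div, abs_of_pos hu0, div_le_iff₀ hu0]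
      rw [hu, hlam]; nlinarith [abs_nonneg y]
    · rw [hu, hlam]; ring
    · field_simp

lemma mem_oct' (S : Set Plane)
    (hS : S = {q : Plane | q 0 ∈ Icc (-(1:ℝ)/2) (1/2) ∧ q 1 ∈ Icc (-(1:ℝ)/2) (1/2)})
    (p : Plane)
    (h1 : 295*|p 0| + 29*|p 1| ≤ 162) (h2 : 29*|p 0| + 295*|p 1| ≤ 162) :
    p ∈ convexHull ℝ (S ∪
      {!₂[0, 1/2 + 29/590], !₂[0, -(1/2 + 29/590)],
       !₂[1/2 + 29/590, 0], !₂[-(1/2 + 29/590), 0]}) := by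
  rw [show (1:ℝ)/2 + 29/590 = 162/295 by norm_num]
  set T : Set Plane := S ∪ {!₂[0, 162/295], !₂[0, -(162/295)], !₂[162/295, 0], !₂[-(162/295), 0]} with hT
  have hconv := convex_convexHull ℝ T
  have hsub := subset_convexHull ℝ T
  rcases le_or_gt (|p 0|) (1/2) with hx2 | hx2
  · rcases le_or_gt (|p 1|) (1/2) with hy2 | hy2
    · exact hsub (Or.inl (by rw [hS]; exact ⟨⟨by cases abs_le.1 hx2; linarith, (abs_le.1 hx2).2⟩,
        ⟨by cases abs_le.1 hy2; linarith, (abs_le.1 hy2).2⟩⟩))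
    · rcases abs_cases (p 1) with ⟨hey, hy0⟩ | ⟨hey, hy0⟩
      · obtain ⟨lam, u, m1, hl0, hu0, hsum, hm1, hxx, hyy⟩ :=
          tri' (p 1) (p 0) (by linarith) (by linarith)
        have hA : (!₂[0, 162/295] : Plane) ∈ convexHull ℝ T :=
          hsub (Or.inr (by simp))
        have hM : (!₂[m1, 1/2] : Plane) ∈ convexHull ℝ T := by
          refine hsub (Or.inl ?_)
          rw [hS]
          refine ⟨⟨?_, ?_⟩, ⟨?_, ?_⟩⟩ <;> simp <;> cases abs_le.1 hm1 <;> linarith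
        have key : lam • (!₂[0, 162/295] : Plane) + u • (!₂[m1, 1/2] : Plane) = p := by
          ext i
          fin_cases i <;>
            simp [PiLp.add_apply, PiLp.smul_apply, smul_eq_mul] <;> linarith [hxx, hyy]
        exact key ▸ hconv hA hM hl0 hu0 hsum
      · obtain ⟨lam, u, m1, hl0, hu0, hsum, hm1, hxx, hyy⟩ :=
          tri' (-(p 1)) (p 0) (by linarith) (by linarith)
        have hA : (!₂[0, -(162/295)] : Plane) ∈ convexHull ℝ T :=
          hsub (Or.inr (by simp))
        have hM : (!₂[m1, -(1/2)] : Plane) ∈ convexHull ℝ T := by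
          refine hsub (Or.inl ?_)
          rw [hS]
          refine ⟨⟨?_, ?_⟩, ⟨?_, ?_⟩⟩ <;> simp <;> cases abs_le.1 hm1 <;> linarith
        have key : lam • (!₂[0, -(162/295)] : Plane) + u • (!₂[m1, -(1/2)] : Plane) = p := by
          ext i
          fin_cases i <;>
            simp [PiLp.add_apply, PiLp.smul_apply, smul_eq_mul] <;> linarith [hxx, hyy]
        exact key ▸ hconv hA hM hl0 hu0 hsum
  · rcases abs_cases (p 0) with ⟨hex, hx0⟩ | ⟨hex, hx0⟩
    · obtain ⟨lam, u, m1, hl0, hu0, hsum, hm1, hxx, hyy⟩ :=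
        tri' (p 0) (p 1) (by linarith) (by linarith)
      have hA : (!₂[162/295, 0] : Plane) ∈ convexHull ℝ T :=
        hsub (Or.inr (by simp))
      have hM : (!₂[1/2, m1] : Plane) ∈ convexHull ℝ T := by
        refine hsub (Or.inl ?_)
        rw [hS]
        refine ⟨⟨?_, ?_⟩, ⟨?_, ?_⟩⟩ <;> simp <;> cases abs_le.1 hm1 <;> linarith
      have key : lam • (!₂[162/295, 0] : Plane) + u • (!₂[1/2, m1] : Plane) = p := by
        ext i
        fin_cases i <;>
          simp [PiLp.add_apply, PiLp.smul_apply, smul_eq_mul] <;> linarith [hxx, hyy]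
      exact key ▸ hconv hA hM hl0 hu0 hsum
    · obtain ⟨lam, u, m1, hl0, hu0, hsum, hm1, hxx, hyy⟩ :=
        tri' (-(p 0)) (p 1) (by linarith) (by linarith)
      have hA : (!₂[-(162/295), 0] : Plane) ∈ convexHull ℝ T :=
        hsub (Or.inr (by simp))
      have hM : (!₂[-(1/2), m1] : Plane) ∈ convexHull ℝ T := by
        refine hsub (Or.inl ?_)
        rw [hS]
        refine ⟨⟨?_, ?_⟩, ⟨?_, ?_⟩⟩ <;> simp <;> cases abs_le.1 hm1 <;> linarith
      have key : lam • (!₂[-(162/295), 0] : Plane) + u • (!₂[-(1/2), m1] : Plane) = p := by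
        ext i
        fin_cases i <;>
          simp [PiLp.add_apply, PiLp.smul_apply, smul_eq_mul] <;> linarith [hxx, hyy]
      exact key ▸ hconv hA hM hl0 hu0 hsum

lemma key_exclusion' (S : Set Plane)
    (hS : S = {q : Plane | q 0 ∈ Icc (-(1:ℝ)/2) (1/2) ∧ q 1 ∈ Icc (-(1:ℝ)/2) (1/2)})
    (α v : ℝ) (hv : (|Real.cos α| + |Real.sin α|)/2 < |v|) :
    v ∉ proj α S := by
  rintro ⟨q, hq, hqe⟩
  rw [hS] at hq
  obtain ⟨⟨hq0l, hq0r⟩, ⟨hq1l, hq1r⟩⟩ := hq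
  have h0 : |q 0| ≤ 1/2 := abs_le.2 ⟨by linarith, hq0r⟩
  have h1 : |q 1| ≤ 1/2 := abs_le.2 ⟨by linarith, hq1r⟩
  have : |v| ≤ (|Real.cos α| + |Real.sin α|)/2 := by
    rw [← hqe]
    calc |q 0 * Real.cos α + q 1 * Real.sin α|
        ≤ |q 0 * Real.cos α| + |q 1 * Real.sin α| := abs_add_le _ _
      _ = |q 0| * |Real.cos α| + |q 1| * |Real.sin α| := by rw [abs_mul, abs_mul]
      _ ≤ (1/2) * |Real.cos α| + (1/2) * |Real.sin α| := by
          have := abs_nonneg (Real.cos α); have := abs_nonneg (Real.sin α)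
          nlinarith [h0, h1, abs_nonneg (q 0), abs_nonneg (q 1)]
      _ = (|Real.cos α| + |Real.sin α|)/2 := by ring
  linarith

lemma interval_excl' (S : Set Plane)
    (hS : S = {q : Plane | q 0 ∈ Icc (-(1:ℝ)/2) (1/2) ∧ q 1 ∈ Icc (-(1:ℝ)/2) (1/2)})
    (x y s t : ℝ) (hs0 : 0 ≤ s) (ht : t ≤ Real.pi/2)
    (hcore : ∀ β ∈ Icc s t,
      (Real.cos β + Real.sin β)/2 < |x| * Real.cos β + |y| * Real.sin β)
    (α β : ℝ) (hβ : β ∈ Icc s t)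
    (hcrel : Real.cos α = Real.cos β ∨ Real.cos α = -Real.cos β)
    (hsrel : Real.sin α = Real.sin β ∨ Real.sin α = -Real.sin β)
    (hval : x * Real.cos α + y * Real.sin α = |x| * Real.cos β + |y| * Real.sin β
          ∨ x * Real.cos α + y * Real.sin α = -(|x| * Real.cos β + |y| * Real.sin β)) :
    x * Real.cos α + y * Real.sin α ∉ proj α S := by
  obtain ⟨hβ1, hβ2⟩ := hβ
  have hcβ : 0 ≤ Real.cos β := Real.cos_nonneg_of_mem_Icc
    ⟨by linarith [Real.pi_pos], by linarith⟩
  have hsβ : 0 ≤ Real.sin β := Real.sin_nonneg_of_nonneg_of_le_pi (by linarith)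
    (by linarith [Real.pi_pos])
  have hgt := hcore β ⟨hβ1, hβ2⟩
  have hRnn : 0 ≤ |x| * Real.cos β + |y| * Real.sin β := by positivity
  apply key_exclusion' S hS
  have hca : |Real.cos α| = Real.cos β := by
    rcases hcrel with h | h <;> rw [h]
    · exact abs_of_nonneg hcβ
    · rw [abs_neg]; exact abs_of_nonneg hcβ
  have hsa : |Real.sin α| = Real.sin β := by
    rcases hsrel with h | h <;> rw [h]
    · exact abs_of_nonneg hsβ
    · rw [abs_neg]; exact abs_of_nonneg hsβ
  have hva : |x * Real.cos α + y * Real.sin α| = |x| * Real.cos β + |y| * Real.sin β := by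
    rcases hval with h | h <;> rw [h]
    · exact abs_of_nonneg hRnn
    · rw [abs_neg]; exact abs_of_nonneg hRnn
  rw [hca, hsa, hva]
  exact hgt

lemma final_bound' (G : Set ℝ) (a b c d : ℝ)
    (h1 : Ioo a b ⊆ Ico 0 (2*Real.pi)) (h2 : Ioo c d ⊆ Ico 0 (2*Real.pi))
    (hdisj : b ≤ c)
    (hlen1 : Real.arctan (29/295) ≤ b - a) (hlen2 : Real.arctan (29/295) ≤ d - c)
    (hG : G ⊆ Ico 0 (2*Real.pi) \ (Ioo a b ∪ Ioo c d)) :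
    volume G ≤ ENNReal.ofReal (2*Real.pi - 2*Real.arctan (29/295)) := by
  have hθ0 : 0 < Real.arctan (29/295) := theta_pos'
  have hUsub : Ioo a b ∪ Ioo c d ⊆ Ico 0 (2*Real.pi) := union_subset h1 h2
  have hmeas : MeasurableSet (Ioo a b ∪ Ioo c d) :=
    measurableSet_Ioo.union measurableSet_Ioo
  have hdisj' : Disjoint (Ioo a b) (Ioo c d) := by
    rw [Set.disjoint_left]; rintro α ⟨ha1, ha2⟩ ⟨ha3, ha4⟩; linarith
  have hvolU : volume (Ioo a b ∪ Ioo c d) = ENNReal.ofReal (b-a) + ENNReal.ofReal (d-c) := by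
    rw [measure_union hdisj' measurableSet_Ioo, Real.volume_Ioo, Real.volume_Ioo]
  have hUlb : ENNReal.ofReal (2*Real.arctan (29/295)) ≤ volume (Ioo a b ∪ Ioo c d) := by
    rw [hvolU, ← ENNReal.ofReal_add (by linarith) (by linarith)]
    exact ENNReal.ofReal_le_ofReal (by linarith)
  calc volume G ≤ volume (Ico 0 (2*Real.pi) \ (Ioo a b ∪ Ioo c d)) := measure_mono hG
    _ = volume (Ico 0 (2*Real.pi)) - volume (Ioo a b ∪ Ioo c d) := by
        rw [measure_diff hUsub hmeas.nullMeasurableSet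
          (ne_of_lt (lt_of_le_of_lt (measure_mono hUsub) (by
            rw [Real.volume_Ico]; exact ENNReal.ofReal_lt_top)))]
    _ ≤ ENNReal.ofReal (2*Real.pi) - ENNReal.ofReal (2*Real.arctan (29/295)) := by
        apply tsub_le_tsub _ hUlb
        rw [Real.volume_Ico]
        exact ENNReal.ofReal_le_ofReal (by linarith)
    _ = ENNReal.ofReal (2*Real.pi - 2*Real.arctan (29/295)) := by
        rw [ENNReal.ofReal_sub _ (by linarith)]

/-- main theorem -/
theorem outside_octagon_angle_measure_le
    (S O : Set Plane)
    (hS : S = {q : Plane | q 0 ∈ Icc (-(1:ℝ)/2) (1/2) ∧ q 1 ∈ Icc (-(1:ℝ)/2) (1/2)})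
    (hO : O = convexHull ℝ (S ∪
      {!₂[0, 1/2 + 29/590], !₂[0, -(1/2 + 29/590)],
       !₂[1/2 + 29/590, 0], !₂[-(1/2 + 29/590), 0]}))
    (p : Plane) (hp : p ∉ O) :
    volume {α ∈ Ico 0 (2 * Real.pi) |
        p 0 * Real.cos α + p 1 * Real.sin α ∈ proj α S}
      ≤ ENNReal.ofReal (2 * Real.pi - 2 * Real.arctan (29 / 295)) := by
  have hcon : 162 < 295*|p 0| + 29*|p 1| ∨ 162 < 29*|p 0| + 295*|p 1| := by
    by_contra hcontra
    push_neg at hcontra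
    exact hp (hO ▸ mem_oct' S hS p hcontra.1 hcontra.2)
  obtain ⟨s, t, hs0, hst, htle, hcore⟩ :=
    core' _ _ (abs_nonneg (p 0)) (abs_nonneg (p 1)) hcon
  have hθ0 : 0 < Real.arctan (29/295) := theta_pos'
  have hπ : 0 < Real.pi := Real.pi_pos
  rcases le_or_gt 0 (p 0) with hx | hx <;> rcases le_or_gt 0 (p 1) with hy | hy
  · -- Q1 : p 0 ≥ 0, p 1 ≥ 0
    apply final_bound' _ s t (Real.pi + s) (Real.pi + t)
      (fun α hα => ⟨by linarith [hα.1], by linarith [hα.2]⟩)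
      (fun α hα => ⟨by linarith [hα.1], by linarith [hα.2]⟩)
      (by linarith) (by linarith) (by linarith)
    rintro α ⟨h1, h2⟩
    refine ⟨h1, ?_⟩
    rintro (⟨ha1, ha2⟩ | ⟨ha1, ha2⟩)
    · exact interval_excl' S hS (p 0) (p 1) s t hs0 htle hcore α α ⟨ha1.le, ha2.le⟩
        (Or.inl rfl) (Or.inl rfl)
        (Or.inl (by rw [abs_of_nonneg hx, abs_of_nonneg hy])) h2
    · exact interval_excl' S hS (p 0) (p 1) s t hs0 htle hcore α (α - Real.pi)
        ⟨by linarith, by linarith⟩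
        (Or.inr (by have := Real.cos_sub_pi α; linarith))
        (Or.inr (by have := Real.sin_sub_pi α; linarith))
        (Or.inr (by rw [abs_of_nonneg hx, abs_of_nonneg hy,
          Real.cos_sub_pi, Real.sin_sub_pi]; ring)) h2
  · -- Q4 : p 0 ≥ 0, p 1 < 0
    apply final_bound' _ (Real.pi - t) (Real.pi - s) (2*Real.pi - t) (2*Real.pi - s)
      (fun α hα => ⟨by linarith [hα.1], by linarith [hα.2]⟩)
      (fun α hα => ⟨by linarith [hα.1], by linarith [hα.2]⟩)
      (by linarith) (by linarith) (by linarith)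
    rintro α ⟨h1, h2⟩
    refine ⟨h1, ?_⟩
    rintro (⟨ha1, ha2⟩ | ⟨ha1, ha2⟩)
    · exact interval_excl' S hS (p 0) (p 1) s t hs0 htle hcore α (Real.pi - α)
        ⟨by linarith, by linarith⟩
        (Or.inr (by have := Real.cos_pi_sub α; linarith))
        (Or.inl (by have := Real.sin_pi_sub α; linarith))
        (Or.inr (by rw [abs_of_nonneg hx, abs_of_nonpos hy.le,
          Real.cos_pi_sub, Real.sin_pi_sub]; ring)) h2
    · exact interval_excl' S hS (p 0) (p 1) s t hs0 htle hcore α (2*Real.pi - α)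
        ⟨by linarith, by linarith⟩
        (Or.inl (by have := Real.cos_two_pi_sub α; linarith))
        (Or.inr (by have := Real.sin_two_pi_sub α; linarith))
        (Or.inl (by rw [abs_of_nonneg hx, abs_of_nonpos hy.le,
          Real.cos_two_pi_sub, Real.sin_two_pi_sub]; ring)) h2
  · -- Q2 : p 0 < 0, p 1 ≥ 0
    apply final_bound' _ (Real.pi - t) (Real.pi - s) (2*Real.pi - t) (2*Real.pi - s)
      (fun α hα => ⟨by linarith [hα.1], by linarith [hα.2]⟩)
      (fun α hα => ⟨by linarith [hα.1], by linarith [hα.2]⟩)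
      (by linarith) (by linarith) (by linarith)
    rintro α ⟨h1, h2⟩
    refine ⟨h1, ?_⟩
    rintro (⟨ha1, ha2⟩ | ⟨ha1, ha2⟩)
    · exact interval_excl' S hS (p 0) (p 1) s t hs0 htle hcore α (Real.pi - α)
        ⟨by linarith, by linarith⟩
        (Or.inr (by have := Real.cos_pi_sub α; linarith))
        (Or.inl (by have := Real.sin_pi_sub α; linarith))
        (Or.inl (by rw [abs_of_nonpos hx.le, abs_of_nonneg hy,
          Real.cos_pi_sub, Real.sin_pi_sub]; ring)) h2
    · exact interval_excl' S hS (p 0) (p 1) s t hs0 htle hcore α (2*Real.pi - α)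
        ⟨by linarith, by linarith⟩
        (Or.inl (by have := Real.cos_two_pi_sub α; linarith))
        (Or.inr (by have := Real.sin_two_pi_sub α; linarith))
        (Or.inr (by rw [abs_of_nonpos hx.le, abs_of_nonneg hy,
          Real.cos_two_pi_sub, Real.sin_two_pi_sub]; ring)) h2
  · -- Q3 : p 0 < 0, p 1 < 0
    apply final_bound' _ s t (Real.pi + s) (Real.pi + t)
      (fun α hα => ⟨by linarith [hα.1], by linarith [hα.2]⟩)
      (fun α hα => ⟨by linarith [hα.1], by linarith [hα.2]⟩)
      (by linarith) (by linarith) (by linarith)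
    rintro α ⟨h1, h2⟩
    refine ⟨h1, ?_⟩
    rintro (⟨ha1, ha2⟩ | ⟨ha1, ha2⟩)
    · exact interval_excl' S hS (p 0) (p 1) s t hs0 htle hcore α α ⟨ha1.le, ha2.le⟩
        (Or.inl rfl) (Or.inl rfl)
        (Or.inr (by rw [abs_of_nonpos hx.le, abs_of_nonpos hy.le]; ring)) h2
    · exact interval_excl' S hS (p 0) (p 1) s t hs0 htle hcore α (α - Real.pi)
        ⟨by linarith, by linarith⟩
        (Or.inr (by have := Real.cos_sub_pi α; linarith))
        (Or.inr (by have := Real.sin_sub_pi α; linarith))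
        (Or.inl (by rw [abs_of_nonpos hx.le, abs_of_nonpos hy.le,
          Real.cos_sub_pi, Real.sin_sub_pi]; ring)) h2
end
end
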